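/- arXiv:2208.04344 — 3 statements merged into one kernel-verified Lean document; each statement's English description precedes it below -/
import Mathlib

section
/- Suppose L : (C, ⊥_C) → (E, ⊥_E) is an orthogonal functor admitting a fully faithful orthogonal right adjoint j : (E, ⊥_E) → (C, ⊥_C). Then ⊥_E equals the pushforward orthogonality relation L_*(⊥_C). In particular, together with the fact that the underlying functor L is a reflective localization of C at W := L⁻¹(Iso E), the functor L is a reflective localization of orthogonal categories at W. -/
open CategoryTheory

universe w v u v₁ u₁ v₂ u₂ v₃ u₃

structure Orthogonality (C : Type u) [Category.{v} C] where
  rel : ∀ {M₁ M₂ N : C}, (M₁ ⟶ N) → (M₂ ⟶ N) → Prop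
  symm : ∀ {M₁ M₂ N : C} {f₁ : M₁ ⟶ N} {f₂ : M₂ ⟶ N}, rel f₁ f₂ → rel f₂ f₁
  comp_stable : ∀ {M₁ M₂ N N' K₁ K₂ : C} {f₁ : M₁ ⟶ N} {f₂ : M₂ ⟶ N}
      (g : N ⟶ N') (h₁ : K₁ ⟶ M₁) (h₂ : K₂ ⟶ M₂),
      rel f₁ f₂ → rel (h₁ ≫ f₁ ≫ g) (h₂ ≫ f₂ ≫ g)

def IsOrthogonalFunctor {C : Type u₁} [Category.{v₁} C] {D : Type u₂} [Category.{v₂} D]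
    (pC : Orthogonality C) (pD : Orthogonality D) (F : C ⥤ D) : Prop :=
  ∀ {M₁ M₂ N : C} (f₁ : M₁ ⟶ N) (f₂ : M₂ ⟶ N),
    pC.rel f₁ f₂ → pD.rel (F.map f₁) (F.map f₂)

/-- A functor sends a class of morphisms to isomorphisms. -/
def SendsToIso {C : Type u₁} [Category.{v₁} C] {D : Type u₂} [Category.{v₂} D]
    (F : C ⥤ D) (W : MorphismProperty C) : Prop :=
  ∀ ⦃X Y : C⦄ (f : X ⟶ Y), W f → IsIso (F.map f)

/-- The universal property of a localization of categories: (i) `L` sends `W` to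
isomorphisms; (ii) every functor sending `W` to isomorphisms factors through `L`
up to natural isomorphism; (iii) whiskering with `L` is bijective on natural
transformations. -/
def IsLocalizationUP {C : Type u₁} [Category.{v₁} C] {E : Type u₂} [Category.{v₂} E]
    (L : C ⥤ E) (W : MorphismProperty C) : Prop :=
  SendsToIso L W ∧
  (∀ {D : Type u₃} [Category.{v₃} D] (F : C ⥤ D), SendsToIso F W →
    ∃ F_W : E ⥤ D, Nonempty (L ⋙ F_W ≅ F)) ∧
  (∀ {D : Type u₃} [Category.{v₃} D] (G H : E ⥤ D),
    Function.Bijective fun α : G ⟶ H => Functor.whiskerLeft L α)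

/-- The universal property of a localization of *orthogonal* categories. -/
def IsOrthLocalizationUP {C : Type u₁} [Category.{v₁} C] {E : Type u₂} [Category.{v₂} E]
    (pC : Orthogonality C) (pE : Orthogonality E) (L : C ⥤ E)
    (W : MorphismProperty C) : Prop :=
  IsOrthogonalFunctor pC pE L ∧
  SendsToIso L W ∧
  (∀ {D : Type u₃} [Category.{v₃} D] (pD : Orthogonality D) (F : C ⥤ D),
    IsOrthogonalFunctor pC pD F → SendsToIso F W →
    ∃ F_W : E ⥤ D, IsOrthogonalFunctor pE pD F_W ∧ Nonempty (L ⋙ F_W ≅ F)) ∧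
  (∀ {D : Type u₃} [Category.{v₃} D] (pD : Orthogonality D) (G H : E ⥤ D),
    IsOrthogonalFunctor pE pD G → IsOrthogonalFunctor pE pD H →
    Function.Bijective fun α : G ⟶ H => Functor.whiskerLeft L α)

/-- if an orthogonal functor `L` admits a fully faithful orthogonal right
adjoint `j`, then `⊥_E` equals the pushforward orthogonality relation `L_*(⊥_C)` (i.e.
it is minimal among orthogonality relations making `L` orthogonal); in particular `L` is
a reflective localization of orthogonal categories at `W := L⁻¹(Iso E)`. -/
theorem reflective_orthogonal_localization {C : Type u₁} [Category.{v₁} C]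
    {E : Type u₂} [Category.{v₂} E] (pC : Orthogonality C) (pE : Orthogonality E)
    (L : C ⥤ E) (j : E ⥤ C)
    (hL : IsOrthogonalFunctor pC pE L) (hj : IsOrthogonalFunctor pE pC j)
    [j.Full] [j.Faithful] (adj : L ⊣ j) :
    (∀ q : Orthogonality E, IsOrthogonalFunctor pC q L →
      ∀ {M₁ M₂ N : E} (g₁ : M₁ ⟶ N) (g₂ : M₂ ⟶ N), pE.rel g₁ g₂ → q.rel g₁ g₂) ∧
    IsOrthLocalizationUP pC pE L (fun _ _ f => IsIso (L.map f)) := by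
  constructor
  · intro q hq M₁ M₂ N g₁ g₂ h
    have h' := hq (j.map g₁) (j.map g₂) (hj g₁ g₂ h)
    have key := q.comp_stable (adj.counit.app N) (inv (adj.counit.app M₁))
      (inv (adj.counit.app M₂)) h'
    have n₁ := adj.counit.naturality g₁
    have n₂ := adj.counit.naturality g₂
    dsimp at n₁ n₂
    have e₁ : inv (adj.counit.app M₁) ≫ L.map (j.map g₁) ≫ adj.counit.app N = g₁ := by
      rw [n₁, IsIso.inv_hom_id_assoc]
    have e₂ : inv (adj.counit.app M₂) ≫ L.map (j.map g₂) ≫ adj.counit.app N = g₂ := by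
      rw [n₂, IsIso.inv_hom_id_assoc]
    rwa [e₁, e₂] at key
  refine ⟨hL, fun X Y f hf => hf, ?_, ?_⟩
  · intro D _ pD F hF hFW
    refine ⟨j ⋙ F, fun f₁ f₂ h => hF _ _ (hj _ _ h), ?_⟩
    have hη : ∀ X : C, IsIso (F.map (adj.unit.app X)) := by
      intro X
      apply hFW
      have tri : L.map (adj.unit.app X) ≫ adj.counit.app (L.obj X) = 𝟙 _ :=
        adj.left_triangle_components X
      have : IsIso (L.map (adj.unit.app X) ≫ adj.counit.app (L.obj X)) := by
        rw [tri]; infer_instance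
      exact IsIso.of_isIso_comp_right _ (adj.counit.app (L.obj X))
    exact ⟨NatIso.ofComponents (fun X => (asIso (F.map (adj.unit.app X))).symm) (by
      intro X Y f
      have n := adj.unit.naturality f
      dsimp at n ⊢
      rw [IsIso.comp_inv_eq, Category.assoc, IsIso.eq_inv_comp, ← F.map_comp, ← F.map_comp, ← n])⟩
  · intro D _ pD G H _ _
    constructor
    · intro α β hαβ
      ext e
      have nα := α.naturality (adj.counit.app e)
      have nβ := β.naturality (adj.counit.app e)
      dsimp at nα nβ
      have hc : α.app (L.obj (j.obj e)) = β.app (L.obj (j.obj e)) :=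
        congrArg (fun γ => NatTrans.app γ (j.obj e)) hαβ
      have : G.map (adj.counit.app e) ≫ α.app e = G.map (adj.counit.app e) ≫ β.app e := by
        rw [nα, nβ, hc]
      exact (cancel_epi (G.map (adj.counit.app e))).mp this
    · intro β
      refine ⟨⟨fun e => G.map (inv (adj.counit.app e)) ≫ β.app (j.obj e) ≫
        H.map (adj.counit.app e), ?_⟩, ?_⟩
      · intro e e' f
        dsimp
        have n1 : adj.counit.app e ≫ f = L.map (j.map f) ≫ adj.counit.app e' := by
          have := adj.counit.naturality f
          dsimp at this
          rw [this]
        have n2 := β.naturality (j.map f)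
        dsimp at n2
        have key : f ≫ inv (adj.counit.app e') = inv (adj.counit.app e) ≫ L.map (j.map f) := by
          rw [IsIso.comp_inv_eq, Category.assoc, ← n1, IsIso.inv_hom_id_assoc]
        rw [← Category.assoc, ← G.map_comp, key, G.map_comp, Category.assoc]
        simp only [Category.assoc]
        rw [← H.map_comp, n1, H.map_comp, ← Category.assoc (β.app (j.obj e)), ← n2,
          Category.assoc]
      · ext X
        dsimp
        have tri : L.map (adj.unit.app X) ≫ adj.counit.app (L.obj X) = 𝟙 _ :=
          adj.left_triangle_components X
        have hinv : inv (adj.counit.app (L.obj X)) = L.map (adj.unit.app X) :=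
          IsIso.inv_eq_of_inv_hom_id tri
        have n := β.naturality (adj.unit.app X)
        dsimp at n
        rw [hinv, ← Category.assoc, n, Category.assoc, ← H.map_comp, tri]
        simp
end

section
/- The functor L : Loc₁^skl → Bℝ (sending every interval to the unique object * and every translation f_ξ to ξ) exhibits Bℝ as the localization of Loc₁^skl at the set of all its morphisms: L sends every morphism to an isomorphism; every functor F : Loc₁^skl → D sending all morphisms to isomorphisms factors through L up to natural isomorphism; and whiskering with L is bijective on natural transformations between functors out of Bℝ. -/
section UP
universe v₁ u₁ v₂ u₂ v₃ u₃

open CategoryTheory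

/-- The skeletal category `Loc₁^skl`: objects are open intervals `(a, b) ⊆ ℝ` with
`-∞ ≤ a < b ≤ +∞` (encoded by their extended-real endpoints). -/
structure OInterval : Type where
  a : EReal
  b : EReal
  hab : a < b

/-- Morphisms `(a,b) → (a',b')` are translations by `ξ ∈ ℝ` carrying `(a,b)` into
`(a',b')`, i.e. with `a' ≤ a + ξ` and `b + ξ ≤ b'` in the extended reals
(equivalently `a' - a ≤ ξ ≤ b' - b`); composition is addition of the `ξ`'s. -/
instance : Category OInterval where
  Hom I J := {ξ : ℝ // J.a ≤ I.a + (ξ : EReal) ∧ I.b + (ξ : EReal) ≤ J.b}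
  id I := ⟨0, by simp⟩
  comp {I J K} f g := ⟨f.1 + g.1, by
    constructor
    · calc K.a ≤ J.a + (g.1 : EReal) := g.2.1
        _ ≤ (I.a + (f.1 : EReal)) + (g.1 : EReal) := by
            exact add_le_add f.2.1 le_rfl
        _ = I.a + ((f.1 + g.1 : ℝ) : EReal) := by
            rw [EReal.coe_add, add_assoc]
    · calc I.b + ((f.1 + g.1 : ℝ) : EReal) = (I.b + (f.1 : EReal)) + (g.1 : EReal) := by
            rw [EReal.coe_add, add_assoc]
        _ ≤ J.b + (g.1 : EReal) := add_le_add f.2.2 le_rfl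
        _ ≤ K.b := g.2.2⟩
  id_comp f := by apply Subtype.ext; simp
  comp_id f := by apply Subtype.ext; simp
  assoc f g h := by apply Subtype.ext; exact add_assoc _ _ _

/-- The object `ℝ = (-∞, +∞)`. -/
noncomputable def Rline : OInterval := ⟨⊥, ⊤, bot_lt_top⟩

/-- The fully faithful functor `j : Bℝ → Loc₁^skl` sending the unique object to
`ℝ = (-∞,+∞)` and `ξ ∈ ℝ` to the translation `f_ξ : ℝ → ℝ`. -/
noncomputable def jLine : SingleObj (Multiplicative ℝ) ⥤ OInterval where
  obj _ := Rline
  map ξ := ⟨Multiplicative.toAdd ξ, by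
    constructor
    · simp [Rline]
    · simp [Rline]⟩
  map_id _ := by apply Subtype.ext; rfl
  map_comp f g := by
    apply Subtype.ext
    exact add_comm (Multiplicative.toAdd g) (Multiplicative.toAdd f)

/-- The functor `L : Loc₁^skl → Bℝ` sending every interval to `*` and the
translation `f_ξ` to `ξ`. -/
def LLine : OInterval ⥤ SingleObj (Multiplicative ℝ) where
  obj _ := SingleObj.star _
  map f := Multiplicative.ofAdd f.1
  map_id _ := rfl
  map_comp f g := by
    exact congrArg Multiplicative.ofAdd (add_comm f.1 g.1)

end UP


open CategoryTheory in
/-- The canonical inclusion-like morphism `I ⟶ ℝ` given by translation by `0`. -/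
def uLine (I : OInterval) : I ⟶ Rline := ⟨0, by simp [Rline]⟩

open CategoryTheory in
/-- `L : Loc₁^skl → Bℝ` exhibits `Bℝ` as the localization of
`Loc₁^skl` at the set of all of its morphisms. -/
theorem LLine_is_localization : IsLocalizationUP LLine ⊤ := by
  refine ⟨?_, ?_, ?_⟩
  · intro X Y f _
    exact ⟨Groupoid.inv _, Groupoid.comp_inv _, Groupoid.inv_comp _⟩
  · intro D _ F hF
    haveI : ∀ I : OInterval, IsIso (F.map (uLine I)) := fun I => hF _ trivial
    refine ⟨jLine ⋙ F, ⟨NatIso.ofComponents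
      (fun I => (asIso (F.map (uLine I))).symm) ?_⟩⟩
    intro I J f
    have key : uLine I ≫ jLine.map (LLine.map f) = f ≫ uLine J := by
      apply Subtype.ext
      show (0 : ℝ) + f.1 = f.1 + 0
      ring
    dsimp
    have h2 : F.map (jLine.map (LLine.map f)) = inv (F.map (uLine I)) ≫ F.map f ≫ F.map (uLine J) := by
      have h3 : F.map (uLine I) ≫ F.map (jLine.map (LLine.map f)) = F.map f ≫ F.map (uLine J) :=
        (F.map_comp _ _).symm.trans ((congrArg F.map key).trans (F.map_comp _ _))
      exact (IsIso.inv_hom_id_assoc (F.map (uLine I)) _).symm.trans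
        (congrArg (inv (F.map (uLine I)) ≫ ·) h3)
    exact (@IsIso.comp_inv_eq _ _ _ _ _ (F.map (uLine J)) (this J) _ _).mpr (h2.trans (Category.assoc _ _ _).symm)
  · intro D _ G H
    constructor
    · intro α β h
      ext
      have := congrArg (fun γ => NatTrans.app γ Rline) h
      exact this
    · intro β
      refine ⟨⟨fun _ => β.app Rline, ?_⟩, ?_⟩
      · intro _ _ ξ
        have hξ : LLine.map (jLine.map ξ) = ξ := rfl
        have := β.naturality (jLine.map ξ)
        exact this
      · ext I
        have h1 : LLine.map (uLine I) = 𝟙 _ := rfl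
        have := β.naturality (uLine I)
        simp only [Functor.comp_map, h1, G.map_id, H.map_id] at this
        simpa using this
end

section
/- Let C be the relative Cauchy evolution category: objects M, M₋, M₊, M_h; non-identity generating morphisms i₋ : M₋ → M, i₊ : M₊ → M, j₋ : M₋ → M_h, j₊ : M₊ → M_h (with no relations, C being the free category on this zig-zag diagram • ← • → •, • ← • → • arranged as M ← M₊ → M_h and M ← M₋ → M_h). Let Bℤ be the one-object groupoid with morphism group ℤ. Then the functor L : C → Bℤ sending all four objects to *, sending i₋ to 1 ∈ ℤ, and sending j₋, j₊, i₊ to 0 ∈ ℤ, exhibits Bℤ as the localization of C at the set W of all morphisms of C. -/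
open CategoryTheory

universe v₁ u₁ v₂ u₂ v₃ u₃

/-- The objects of the relative Cauchy evolution category: `M`, `M₋`, `M₊`, `M_h`. -/
inductive RObj : Type | M | Mm | Mp | Mh

/-- The generating arrows: `i₊ : M₊ → M`, `i₋ : M₋ → M`, `j₊ : M₊ → M_h`,
`j₋ : M₋ → M_h`. -/
inductive RHom : RObj → RObj → Type
  | ip : RHom .Mp .M
  | im : RHom .Mm .M
  | jp : RHom .Mp .Mh
  | jm : RHom .Mm .Mh

instance : Quiver RObj := ⟨RHom⟩

/-- The prefunctor defining `L : C → Bℤ`: all objects to `*`, `i₋ ↦ 1` and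
`i₊, j₊, j₋ ↦ 0`. -/
def RPhi : RObj ⥤q SingleObj (Multiplicative ℤ) where
  obj _ := SingleObj.star _
  map f := match f with
    | .im => Multiplicative.ofAdd 1
    | .ip => 1
    | .jp => 1
    | .jm => 1

/-- The relative Cauchy evolution category: the free category on the quiver `RObj`. -/
abbrev RCE := Paths RObj

/-- The comparison functor `L : C → Bℤ`. -/
def LRCE : RCE ⥤ SingleObj (Multiplicative ℤ) := Paths.lift RPhi

/-! ### Auxiliary definitions and lemmas -/

/-- An integer, viewed as a morphism of `Bℤ`. -/
def bmor (n : ℤ) :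
    SingleObj.star (Multiplicative ℤ) ⟶ SingleObj.star (Multiplicative ℤ) :=
  Multiplicative.ofAdd n

lemma bmor_comp (m n : ℤ) : bmor m ≫ bmor n = bmor (m + n) := by
  show Multiplicative.ofAdd n * Multiplicative.ofAdd m = Multiplicative.ofAdd (m + n)
  rw [← ofAdd_add, add_comm]

lemma bmor_zero : bmor 0 = 𝟙 _ := rfl

lemma bmor_eq_of_eq {m n : ℤ} (h : m = n) : bmor m = bmor n := by rw [h]

lemma aut_one_hom {D : Type u₃} [Category.{v₃} D] {X : D} : (1 : Aut X).hom = 𝟙 X := rfl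

lemma map_bmor_zero {D : Type u₃} [Category.{v₃} D] (G : SingleObj (Multiplicative ℤ) ⥤ D) :
    G.map (bmor 0) = 𝟙 (G.obj (SingleObj.star _)) :=
  G.map_id _

/-- Mapping a `cons` path under a functor out of `RCE`. -/
lemma map_cons_eq {D : Type u₃} [Category.{v₃} D] (F : RCE ⥤ D) {X Z W : RObj}
    (p : Quiver.Path X Z) (e : RHom Z W) :
    F.map (show (Paths.of RObj).obj X ⟶ (Paths.of RObj).obj W from p.cons e)
      = F.map (show (Paths.of RObj).obj X ⟶ (Paths.of RObj).obj Z from p)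
        ≫ F.map (show (Paths.of RObj).obj Z ⟶ (Paths.of RObj).obj W from Quiver.Hom.toPath e) := by
  rw [← F.map_comp]
  rfl

section Aux

variable {D : Type u₃} [Category.{v₃} D]

/-- Given `G H : Bℤ ⥤ D`, a morphism between the images of the point which is compatible
with the generator is compatible with every morphism of `Bℤ`. -/
lemma bz_nat (G H : SingleObj (Multiplicative ℤ) ⥤ D)
    (b : G.obj (SingleObj.star _) ⟶ H.obj (SingleObj.star _))
    (hb : G.map (bmor 1) ≫ b = b ≫ H.map (bmor 1)) :
    ∀ z : SingleObj.star (Multiplicative ℤ) ⟶ SingleObj.star (Multiplicative ℤ),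
      G.map z ≫ b = b ≫ H.map z := by
  have hmul : ∀ x y : SingleObj.star (Multiplicative ℤ) ⟶ SingleObj.star (Multiplicative ℤ),
      (G.map x ≫ b = b ≫ H.map x) → (G.map y ≫ b = b ≫ H.map y) →
      G.map (x ≫ y) ≫ b = b ≫ H.map (x ≫ y) := by
    intro x y hx hy
    rw [G.map_comp, H.map_comp, Category.assoc, hy, ← Category.assoc, hx, Category.assoc]
  have hneg : G.map (bmor (-1)) ≫ b = b ≫ H.map (bmor (-1)) := by
    have h1 : bmor 1 ≫ bmor (-1) = 𝟙 _ := by rw [bmor_comp]; norm_num [bmor_zero]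
    have h2 : bmor (-1) ≫ bmor 1 = 𝟙 _ := by rw [bmor_comp]; norm_num [bmor_zero]
    calc G.map (bmor (-1)) ≫ b
        = G.map (bmor (-1)) ≫ b ≫ H.map (bmor 1) ≫ H.map (bmor (-1)) := by
          rw [← H.map_comp, h1, H.map_id, Category.comp_id]
      _ = G.map (bmor (-1)) ≫ (G.map (bmor 1) ≫ b) ≫ H.map (bmor (-1)) := by
          rw [hb]; simp
      _ = b ≫ H.map (bmor (-1)) := by
          rw [← Category.assoc, ← Category.assoc, ← G.map_comp, h2, G.map_id,
            Category.id_comp]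
  have key : ∀ n : ℤ, G.map (bmor n) ≫ b = b ≫ H.map (bmor n) := by
    intro n
    induction n using Int.induction_on with
    | zero => rw [bmor_zero, G.map_id, H.map_id, Category.id_comp, Category.comp_id]
    | succ n ih =>
      have : bmor ((n : ℤ) + 1) = bmor n ≫ bmor 1 := (bmor_comp n 1).symm
      rw [this]; exact hmul _ _ ih hb
    | pred n ih =>
      have : bmor (-(n : ℤ) - 1) = bmor (-n) ≫ bmor (-1) := by
        rw [bmor_comp]; exact bmor_eq_of_eq (by ring)
      rw [this]; exact hmul _ _ ih hneg
  intro z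
  exact key (Multiplicative.toAdd z)

end Aux

/-- Abbreviations for the generating morphisms of `RCE`. -/
abbrev ipP : (Paths.of RObj).obj RObj.Mp ⟶ (Paths.of RObj).obj RObj.M := Quiver.Hom.toPath RHom.ip
abbrev imP : (Paths.of RObj).obj RObj.Mm ⟶ (Paths.of RObj).obj RObj.M := Quiver.Hom.toPath RHom.im
abbrev jpP : (Paths.of RObj).obj RObj.Mp ⟶ (Paths.of RObj).obj RObj.Mh := Quiver.Hom.toPath RHom.jp
abbrev jmP : (Paths.of RObj).obj RObj.Mm ⟶ (Paths.of RObj).obj RObj.Mh := Quiver.Hom.toPath RHom.jm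

lemma LRCE_ip : LRCE.map ipP = bmor 0 := Paths.lift_toPath _ _
lemma LRCE_im : LRCE.map imP = bmor 1 := Paths.lift_toPath _ _
lemma LRCE_jp : LRCE.map jpP = bmor 0 := Paths.lift_toPath _ _
lemma LRCE_jm : LRCE.map jmP = bmor 0 := Paths.lift_toPath _ _

/-- the functor `L : C → Bℤ` sending all objects to `*`, `i₋` to `1 ∈ ℤ`
and `i₊, j₊, j₋` to `0 ∈ ℤ` exhibits `Bℤ` as the localization of the relative Cauchy
evolution category `C` at the set of all of its morphisms. -/
theorem RCE_localization :
    LRCE.map (Quiver.Hom.toPath RHom.im) = Multiplicative.ofAdd 1 ∧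
    LRCE.map (Quiver.Hom.toPath RHom.ip) = Multiplicative.ofAdd 0 ∧
    LRCE.map (Quiver.Hom.toPath RHom.jp) = Multiplicative.ofAdd 0 ∧
    LRCE.map (Quiver.Hom.toPath RHom.jm) = Multiplicative.ofAdd 0 ∧
    IsLocalizationUP LRCE ⊤ := by
  refine ⟨LRCE_im, LRCE_ip, LRCE_jp, LRCE_jm, ?_, ?_, ?_⟩
  · -- L inverts everything: Bℤ is a groupoid
    intro X Y f _
    infer_instance
  · -- existence of a factorization
    intro D _ F hF
    haveI h1 : IsIso (F.map ipP) := hF _ trivial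
    haveI h2 : IsIso (F.map imP) := hF _ trivial
    haveI h3 : IsIso (F.map jpP) := hF _ trivial
    haveI h4 : IsIso (F.map jmP) := hF _ trivial
    -- the distinguished automorphism of F.obj M
    set γ : Aut (F.obj ((Paths.of RObj).obj RObj.M)) :=
      (asIso (F.map ipP)).symm ≪≫ asIso (F.map jpP) ≪≫ (asIso (F.map jmP)).symm ≪≫
        asIso (F.map imP) with hγ
    set FW : SingleObj (Multiplicative ℤ) ⥤ D :=
      SingleObj.functor ((Aut.toEnd _).comp (zpowersHom _ γ)) with hFW
    have hFWmap : ∀ n : ℤ, FW.map (bmor n) = (γ ^ n).hom := by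
      intro n
      show Aut.toEnd _ (γ ^ (Multiplicative.toAdd (Multiplicative.ofAdd n))) = _
      rw [toAdd_ofAdd]
      rfl
    refine ⟨FW, ⟨?_⟩⟩
    -- components of the natural isomorphism
    let app : ∀ X : RCE, (LRCE ⋙ FW).obj X ≅ F.obj X := fun X =>
      match X with
      | RObj.M => Iso.refl _
      | RObj.Mp => (asIso (F.map ipP)).symm
      | RObj.Mh => (asIso (F.map ipP)).symm ≪≫ @asIso _ _ _ _ (F.map jpP) h3
      | RObj.Mm => (asIso (F.map ipP)).symm ≪≫ @asIso _ _ _ _ (F.map jpP) h3 ≪≫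
          (@asIso _ _ _ _ (F.map jmP) h4).symm
    have hgen : ∀ {X Y : RObj} (e : RHom X Y),
        (LRCE ⋙ FW).map (Quiver.Hom.toPath e) ≫ (app Y).hom
          = (app X).hom ≫ F.map (Quiver.Hom.toPath e) := by
      intro X Y e
      cases e with
      | ip =>
        show FW.map (LRCE.map ipP) ≫ _ = _
        rw [LRCE_ip, hFWmap, zpow_zero, aut_one_hom]
        show 𝟙 (F.obj ((Paths.of RObj).obj RObj.M)) ≫ 𝟙 (F.obj ((Paths.of RObj).obj RObj.M))
          = inv (F.map ipP) ≫ F.map ipP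
        simp
      | jp =>
        show FW.map (LRCE.map jpP) ≫ _ = _
        rw [LRCE_jp, hFWmap, zpow_zero, aut_one_hom]
        show 𝟙 (F.obj ((Paths.of RObj).obj RObj.M)) ≫ (inv (F.map ipP) ≫ F.map jpP)
          = inv (F.map ipP) ≫ F.map jpP
        simp
      | jm =>
        show FW.map (LRCE.map jmP) ≫ _ = _
        rw [LRCE_jm, hFWmap, zpow_zero, aut_one_hom]
        show 𝟙 (F.obj ((Paths.of RObj).obj RObj.M)) ≫ (inv (F.map ipP) ≫ F.map jpP)
          = (inv (F.map ipP) ≫ (F.map jpP ≫ inv (F.map jmP))) ≫ F.map jmP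
        simp
      | im =>
        show FW.map (LRCE.map imP) ≫ _ = _
        rw [LRCE_im, hFWmap, zpow_one, hγ]
        show (inv (F.map ipP) ≫ (F.map jpP ≫ (inv (F.map jmP) ≫ F.map imP)))
            ≫ 𝟙 (F.obj ((Paths.of RObj).obj RObj.M))
          = (inv (F.map ipP) ≫ (F.map jpP ≫ inv (F.map jmP))) ≫ F.map imP
        simp
    refine NatIso.ofComponents app ?_
    intro X Y f
    change @Quiver.Path RObj _ X Y at f
    induction f with
    | nil =>
      have h : (Quiver.Path.nil : X ⟶ X) = 𝟙 X := rfl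
      erw [h, CategoryTheory.Functor.map_id, CategoryTheory.Functor.map_id,
        Category.id_comp, Category.comp_id]
    | cons p e ih =>
      rename_i Z W
      erw [map_cons_eq (LRCE ⋙ FW) p e, map_cons_eq F p e, Category.assoc, hgen e,
        ← Category.assoc, ih, Category.assoc]
      rfl
  · -- bijectivity of whiskering
    intro D _ G H
    constructor
    · intro α β h
      ext x
      have := congrArg (fun (t : LRCE ⋙ G ⟶ LRCE ⋙ H) => t.app ((Paths.of RObj).obj RObj.M)) h
      exact this
    · intro β
      -- all components of β agree
      have hp : β.app ((Paths.of RObj).obj RObj.Mp) = β.app ((Paths.of RObj).obj RObj.M) := by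
        have h := β.naturality ipP
        rw [Functor.comp_map, Functor.comp_map, LRCE_ip, map_bmor_zero G, map_bmor_zero H] at h
        exact (((Category.id_comp _).symm.trans h).trans (Category.comp_id _)).symm
      have hh : β.app ((Paths.of RObj).obj RObj.Mh) = β.app ((Paths.of RObj).obj RObj.Mp) := by
        have h := β.naturality jpP
        rw [Functor.comp_map, Functor.comp_map, LRCE_jp, map_bmor_zero G, map_bmor_zero H] at h
        exact ((Category.id_comp _).symm.trans h).trans (Category.comp_id _)
      have hm : β.app ((Paths.of RObj).obj RObj.Mm) = β.app ((Paths.of RObj).obj RObj.Mh) := by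
        have h := β.naturality jmP
        rw [Functor.comp_map, Functor.comp_map, LRCE_jm, map_bmor_zero G, map_bmor_zero H] at h
        exact (((Category.id_comp _).symm.trans h).trans (Category.comp_id _)).symm
      have hb : G.map (bmor 1) ≫ β.app ((Paths.of RObj).obj RObj.M)
          = β.app ((Paths.of RObj).obj RObj.M) ≫ H.map (bmor 1) := by
        have := β.naturality imP
        rw [Functor.comp_map, Functor.comp_map, LRCE_im] at this
        rw [this, hm, hh, hp]
      refine ⟨SingleObj.natTrans (β.app ((Paths.of RObj).obj RObj.M))
        (fun a => bz_nat G H _ hb a), ?_⟩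
      ext X
      show β.app ((Paths.of RObj).obj RObj.M) = β.app X
      cases X with
      | M => rfl
      | Mp => exact hp.symm
      | Mh => exact (hh.trans hp).symm
      | Mm => exact ((hm.trans hh).trans hp).symm
end
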